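/- Let y = μ + Z ∈ ℝ^m with Z ~ P₀ zero-mean and symmetric, let T ∈ ℝ, and let Ĝ = {γ ∈ [m] : y_γ ≥ T} be the file-drawer selection. Define Ĝ⁺_ν = {γ ∈ [m] : y_γ ≥ T − 2 q^ν([m])}, where q^β(I) is the 1−β quantile of max_{i∈I}|Z_i|. Then for any 0 < ν < α < 1, P{μ_γ ∈ (y_γ ± q^{(α−ν)}(Ĝ⁺_ν)) for all γ ∈ Ĝ} ≥ 1 − α. -/

import Mathlib

open MeasureTheory Set

namespace FileDrawerAux

variable {m : ℕ}

/-- The acceptance region. -/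
def A (t : ℝ) (I : Set (Fin m)) : Set (Fin m → ℝ) := {z | ∀ i ∈ I, |z i| ≤ t}

lemma measA (t : ℝ) (I : Set (Fin m)) : MeasurableSet (A t I) := by
  have h : A t I = ⋂ i ∈ I, {z : Fin m → ℝ | |z i| ≤ t} := by
    ext z; simp [A]
  rw [h]
  exact MeasurableSet.biInter (Set.to_countable I) fun i _ =>
    measurableSet_le (measurable_pi_apply i).abs measurable_const

lemma A_mono {s t : ℝ} (h : s ≤ t) (I : Set (Fin m)) : A s I ⊆ A t I :=
  fun z hz i hi => (hz i hi).trans h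

lemma A_anti {I J : Set (Fin m)} (h : I ⊆ J) (t : ℝ) : A t J ⊆ A t I :=
  fun z hz i hi => hz i (h hi)

variable (P0 : Measure (Fin m → ℝ)) [IsProbabilityMeasure P0]

/-- The set whose infimum is the quantile. -/
def S (β : ℝ) (I : Set (Fin m)) : Set ℝ :=
  {t : ℝ | ENNReal.ofReal (1 - β) ≤ P0 (A t I)}

lemma S_upward {β : ℝ} {I : Set (Fin m)} {s t : ℝ} (hs : s ∈ S P0 β I) (hst : s ≤ t) :
    t ∈ S P0 β I :=
  hs.trans (measure_mono (A_mono hst I))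

lemma S_nonempty {β : ℝ} (hβ : 0 < β) (I : Set (Fin m)) : (S P0 β I).Nonempty := by
  have hU : (⋃ n : ℕ, A (n : ℝ) I) = univ := by
    ext z
    simp only [mem_iUnion, mem_univ, iff_true]
    obtain ⟨M, hM⟩ := Finite.exists_le (fun i : Fin m => |z i|)
    obtain ⟨n, hn⟩ := exists_nat_ge M
    exact ⟨n, fun i _ => (hM i).trans hn⟩
  have hmono : Monotone (fun n : ℕ => A (n : ℝ) I) := fun a b hab =>
    A_mono (by exact_mod_cast hab) I
  have hT : Filter.Tendsto (fun n : ℕ => P0 (A (n : ℝ) I)) Filter.atTop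
      (nhds (P0 (⋃ n : ℕ, A (n : ℝ) I))) := tendsto_measure_iUnion_atTop hmono
  rw [hU, measure_univ] at hT
  have hc : ENNReal.ofReal (1 - β) < 1 := by
    rcases le_or_gt (1 - β) 0 with h | h
    · simpa [ENNReal.ofReal_eq_zero.2 h] using zero_lt_one
    · exact ENNReal.ofReal_lt_one.2 (by linarith)
  have := hT.eventually (eventually_ge_nhds hc)
  obtain ⟨n, hn⟩ := this.exists
  exact ⟨(n : ℝ), hn⟩

lemma S_subset_nonneg {β : ℝ} (hβ : β < 1) {I : Set (Fin m)} (hI : I.Nonempty) :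
    S P0 β I ⊆ Ici (0 : ℝ) := by
  intro t ht
  by_contra hlt
  simp only [mem_Ici, not_le] at hlt
  obtain ⟨i0, hi0⟩ := hI
  have hempty : A t I = (∅ : Set (Fin m → ℝ)) := by
    ext z
    simp only [A, mem_setOf_eq, mem_empty_iff_false, iff_false, not_forall]
    exact ⟨i0, hi0, by nlinarith [abs_nonneg (z i0)]⟩
  have ht' : ENNReal.ofReal (1 - β) ≤ P0 (A t I) := ht
  rw [hempty, measure_empty] at ht'
  have h0 : ENNReal.ofReal (1 - β) = 0 := le_antisymm ht' zero_le
  have : (1 : ℝ) - β ≤ 0 := ENNReal.ofReal_eq_zero.1 h0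
  linarith

lemma quantile_nonneg {β : ℝ} (hβ : β < 1) {I : Set (Fin m)} (hI : I.Nonempty) :
    0 ≤ sInf (S P0 β I) :=
  Real.sInf_nonneg (fun _ hx => S_subset_nonneg P0 hβ hI hx)

lemma quantile_mem {β : ℝ} (hβ0 : 0 < β) (hβ1 : β < 1) (I : Set (Fin m)) :
    ENNReal.ofReal (1 - β) ≤ P0 (A (sInf (S P0 β I)) I) := by
  rcases I.eq_empty_or_nonempty with rfl | hI
  · have : A (sInf (S P0 β (∅ : Set (Fin m)))) (∅ : Set (Fin m)) = univ := by
      ext z; simp [A]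
    rw [this, measure_univ]
    exact ENNReal.ofReal_le_one.2 (by linarith)
  · set c := sInf (S P0 β I) with hc
    have hne := S_nonempty P0 hβ0 I
    have hbdd : BddBelow (S P0 β I) := ⟨0, fun x hx => S_subset_nonneg P0 hβ1 hI hx⟩
    have hstep : ∀ n : ℕ, (c + 1 / ((n : ℝ) + 1)) ∈ S P0 β I := by
      intro n
      have hpos : (0 : ℝ) < 1 / ((n : ℝ) + 1) := by positivity
      have hlt : c < c + 1 / ((n : ℝ) + 1) := by linarith
      obtain ⟨s, hsS, hs⟩ := Real.lt_sInf_add_pos hne hpos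
      exact S_upward P0 hsS (le_of_lt (by rw [hc]; exact hs))
    have hinter : A c I = ⋂ n : ℕ, A (c + 1 / ((n : ℝ) + 1)) I := by
      apply Subset.antisymm
      · intro z hz
        refine mem_iInter.2 fun n => A_mono ?_ I hz
        have hpos : (0 : ℝ) < 1 / ((n : ℝ) + 1) := by positivity
        linarith
      · intro z hz i hi
        have h1 : ∀ n : ℕ, |z i| ≤ c + 1 / ((n : ℝ) + 1) := fun n =>
          (mem_iInter.1 hz n) i hi
        refine le_of_forall_pos_le_add fun ε hε => ?_
        obtain ⟨n, hn⟩ := exists_nat_one_div_lt hε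
        exact (h1 n).trans (by linarith)
    have hanti : Antitone (fun n : ℕ => A (c + 1 / ((n : ℝ) + 1)) I) := by
      intro a b hab
      apply A_mono
      have : (1 : ℝ) / ((b : ℝ) + 1) ≤ 1 / ((a : ℝ) + 1) := by
        apply one_div_le_one_div_of_le (by positivity)
        have := (Nat.cast_le (α := ℝ)).2 hab
        linarith
      linarith
    have hT : Filter.Tendsto (fun n : ℕ => P0 (A (c + 1 / ((n : ℝ) + 1)) I))
        Filter.atTop (nhds (P0 (⋂ n : ℕ, A (c + 1 / ((n : ℝ) + 1)) I))) :=
      tendsto_measure_iInter_atTop (fun n => (measA _ I).nullMeasurableSet) hanti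
        ⟨0, measure_ne_top _ _⟩
    rw [hinter]
    exact ge_of_tendsto hT (Filter.Eventually.of_forall fun n => hstep n)

lemma quantile_mono {β : ℝ} (hβ0 : 0 < β) (hβ1 : β < 1) {I J : Set (Fin m)}
    (hIJ : I ⊆ J) (hI : I.Nonempty) : sInf (S P0 β I) ≤ sInf (S P0 β J) := by
  refine csInf_le_csInf ⟨0, fun x hx => S_subset_nonneg P0 hβ1 hI hx⟩
    (S_nonempty P0 hβ0 J) fun t ht => ?_
  exact le_trans ht (measure_mono (A_anti hIJ t))

end FileDrawerAux

/-- Locally simultaneous inference for the file-drawer problem, parametric location family. -/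
theorem file_drawer_locally_simultaneous
    {m : ℕ} (hm : 0 < m)
    (P0 : Measure (Fin m → ℝ)) [IsProbabilityMeasure P0]
    (hmean : ∀ i, ∫ z, z i ∂P0 = 0)
    (hsym : P0.map (fun z i => -(z i)) = P0)
    (q : ℝ → Set (Fin m) → ℝ)
    (hq : ∀ β I, q β I =
      sInf {t : ℝ | ENNReal.ofReal (1 - β) ≤ P0 {z | ∀ i ∈ I, |z i| ≤ t}})
    (T : ℝ)
    (μ : Fin m → ℝ) (α ν : ℝ) (hν : 0 < ν) (hνα : ν < α) (hα : α < 1) :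
    ENNReal.ofReal (1 - α) ≤
      P0 {z | ∀ γ : Fin m, T ≤ (μ + z) γ →
        |(μ + z) γ - μ γ| ≤ q (α - ν) {γ' | T - 2 * q ν Set.univ ≤ (μ + z) γ'}} := by
  classical
  open FileDrawerAux in
  -- identify q with sInf of S
  have hqS : ∀ β I, q β I = sInf (S P0 β I) := by
    intro β I
    rw [hq]; rfl
  set c := q ν Set.univ with hcdef
  set G : Set (Fin m) := {γ | T - c ≤ μ γ} with hGdef
  set r := q (α - ν) G with hrdef
  have hν1 : ν < 1 := hνα.trans hα
  have hαν0 : 0 < α - ν := by linarith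
  have hαν1 : α - ν < 1 := by linarith
  have hc0 : 0 ≤ c := by
    rw [hcdef, hqS]
    exact quantile_nonneg P0 hν1 ⟨⟨0, hm⟩, mem_univ _⟩
  -- the two good events
  set EA : Set (Fin m → ℝ) := A c (Set.univ) with hEA
  set EB : Set (Fin m → ℝ) := A r G with hEB
  -- event inclusion
  have hsub : EA ∩ EB ⊆ {z | ∀ γ : Fin m, T ≤ (μ + z) γ →
      |(μ + z) γ - μ γ| ≤ q (α - ν) {γ' | T - 2 * q ν Set.univ ≤ (μ + z) γ'}} := by
    rintro z ⟨hzA, hzB⟩ γ hγ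
    simp only [Pi.add_apply] at hγ ⊢
    have habs : ∀ i, |z i| ≤ c := fun i => hzA i (mem_univ i)
    have hzγ : z γ ≤ c := (abs_le.1 (habs γ)).2
    have hγG : γ ∈ G := by
      simp only [hGdef, mem_setOf_eq]
      linarith
    have h1 : |z γ| ≤ r := hzB γ hγG
    have hGsub : G ⊆ {γ' | T - 2 * c ≤ μ γ' + z γ'} := by
      intro γ' hγ'
      simp only [hGdef, mem_setOf_eq] at hγ' ⊢
      have := (abs_le.1 (habs γ')).1
      linarith
    have h2 : r ≤ q (α - ν) {γ' | T - 2 * c ≤ μ γ' + z γ'} := by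
      rw [hrdef, hqS, hqS]
      exact quantile_mono P0 hαν0 hαν1 hGsub ⟨γ, hγG⟩
    have : μ γ + z γ - μ γ = z γ := by ring
    rw [this]
    exact h1.trans h2
  -- probability bounds
  have hA : ENNReal.ofReal (1 - ν) ≤ P0 EA := by
    rw [hEA, hcdef, hqS]
    exact quantile_mem P0 hν hν1 _
  have hB : ENNReal.ofReal (1 - (α - ν)) ≤ P0 EB := by
    rw [hEB, hrdef, hqS]
    exact quantile_mem P0 hαν0 hαν1 _
  have hAc : P0 EAᶜ ≤ ENNReal.ofReal ν := by
    rw [prob_compl_eq_one_sub (measA c Set.univ)]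
    calc 1 - P0 EA ≤ 1 - ENNReal.ofReal (1 - ν) := tsub_le_tsub_left hA 1
      _ = ENNReal.ofReal ν := by
          rw [← ENNReal.ofReal_one, ← ENNReal.ofReal_sub _ (by linarith : (0:ℝ) ≤ 1 - ν)]
          norm_num
  have hBc : P0 EBᶜ ≤ ENNReal.ofReal (α - ν) := by
    rw [prob_compl_eq_one_sub (measA r G)]
    calc 1 - P0 EB ≤ 1 - ENNReal.ofReal (1 - (α - ν)) := tsub_le_tsub_left hB 1
      _ = ENNReal.ofReal (α - ν) := by
          rw [← ENNReal.ofReal_one,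
            ← ENNReal.ofReal_sub _ (by linarith : (0:ℝ) ≤ 1 - (α - ν))]
          norm_num
  set Tgt := {z | ∀ γ : Fin m, T ≤ (μ + z) γ →
      |(μ + z) γ - μ γ| ≤ q (α - ν) {γ' | T - 2 * q ν Set.univ ≤ (μ + z) γ'}}
  have hcover : (Set.univ : Set (Fin m → ℝ)) ⊆ EAᶜ ∪ (EBᶜ ∪ Tgt) := by
    intro z _
    by_cases hzA : z ∈ EA
    · by_cases hzB : z ∈ EB
      · exact Or.inr (Or.inr (hsub ⟨hzA, hzB⟩))
      · exact Or.inr (Or.inl hzB)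
    · exact Or.inl hzA
  have hone : (1 : ENNReal) ≤ P0 EAᶜ + (P0 EBᶜ + P0 Tgt) := by
    calc (1 : ENNReal) = P0 Set.univ := (measure_univ).symm
      _ ≤ P0 (EAᶜ ∪ (EBᶜ ∪ Tgt)) := measure_mono hcover
      _ ≤ P0 EAᶜ + P0 (EBᶜ ∪ Tgt) := measure_union_le _ _
      _ ≤ P0 EAᶜ + (P0 EBᶜ + P0 Tgt) := add_le_add_right (measure_union_le _ _) _
  have hsum : (1 : ENNReal) ≤ ENNReal.ofReal α + P0 Tgt := by
    calc (1 : ENNReal) ≤ P0 EAᶜ + (P0 EBᶜ + P0 Tgt) := hone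
      _ ≤ ENNReal.ofReal ν + (ENNReal.ofReal (α - ν) + P0 Tgt) := by
          exact add_le_add hAc (add_le_add_left hBc _)
      _ = ENNReal.ofReal α + P0 Tgt := by
          rw [← add_assoc, ← ENNReal.ofReal_add (le_of_lt hν) (le_of_lt hαν0)]
          norm_num
  have : ENNReal.ofReal (1 - α) = 1 - ENNReal.ofReal α := by
    rw [← ENNReal.ofReal_one, ← ENNReal.ofReal_sub _ (by linarith : (0:ℝ) ≤ α)]
  rw [this]
  exact tsub_le_iff_left.2 hsum
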